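/- Let d > m > 1 be integers and let g(z) = z^d + t·z^(m-1) + Σ_{i=2}^{m} (α_i t + β_i) z^(m-i) be a polynomial with coefficients in ℂ(t), where α_2 ≠ 0. Then g is not conjugate over the algebraic closure of ℂ(t) by any linear polynomial to z^d. -/

import Mathlib

open Polynomial

/-- The element `t` in the algebraic closure of `ℂ(t)`. -/
noncomputable def tK : AlgebraicClosure (RatFunc ℂ) :=
  algebraMap (RatFunc ℂ) (AlgebraicClosure (RatFunc ℂ)) RatFunc.X

/-- The embedding of `ℂ` into the algebraic closure of `ℂ(t)`. -/
noncomputable def cK : ℂ →+* AlgebraicClosure (RatFunc ℂ) :=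
  (algebraMap (RatFunc ℂ) (AlgebraicClosure (RatFunc ℂ))).comp (algebraMap ℂ (RatFunc ℂ))

theorem tK_ne_zero : tK ≠ 0 := by
  simp [tK, _root_.map_ne_zero, RatFunc.X_ne_zero]

theorem stmt1 (d m : ℕ) (hm : 1 < m) (hd : m < d) (α β : ℕ → ℂ) (hα : α 2 ≠ 0)
    (g : Polynomial (AlgebraicClosure (RatFunc ℂ)))
    (hg : g = X ^ d + C tK * X ^ (m - 1) +
      ∑ i ∈ Finset.Icc 2 m, C (cK (α i) * tK + cK (β i)) * X ^ (m - i)) :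
    ¬ ∃ a b : AlgebraicClosure (RatFunc ℂ), a ≠ 0 ∧
      g.comp (C a * X + C b) = (C a * X + C b).comp (X ^ d) := by
  rintro ⟨a, b, ha, heq⟩
  set q : Polynomial (AlgebraicClosure (RatFunc ℂ)) := C a⁻¹ * X - C (a⁻¹ * b) with hq
  have hinv : (C a * X + C b).comp q = X := by
    rw [hq, add_comp, mul_comp, C_comp, C_comp, X_comp, mul_sub, ← mul_assoc, ← C_mul,
      mul_inv_cancel₀ ha, C_1, one_mul, ← C_mul, ← mul_assoc, mul_inv_cancel₀ ha, one_mul]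
    ring
  have h2 := congrArg (fun p => p.comp q) heq
  rw [comp_assoc, hinv, comp_X, comp_assoc, pow_comp, X_comp, add_comp, mul_comp, C_comp,
    C_comp, X_comp] at h2
  -- h2 : g = C a * q ^ d + C b
  set c : AlgebraicClosure (RatFunc ℂ) := a * a⁻¹ ^ d with hcdef
  have hg3 : g = C c * (X + C (-b)) ^ d + C b := by
    rw [h2]
    congr 1
    rw [show q = C a⁻¹ * (X + C (-b)) by rw [hq, map_mul, map_neg]; ring]
    rw [mul_pow, ← C_pow, ← mul_assoc, ← C_mul]
  -- coefficients of the right-hand side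
  have key : ∀ k, g.coeff k = c * ((-b) ^ (d - k) * (d.choose k : _)) + if k = 0 then b else 0 := by
    intro k
    rw [hg3, coeff_add, coeff_C_mul, coeff_X_add_C_pow, coeff_C]
  -- coefficients of g from its definition
  have cd : g.coeff d = 1 := by
    rw [hg, coeff_add, coeff_add, coeff_X_pow, coeff_C_mul, coeff_X_pow, if_pos rfl,
      if_neg (by omega), finset_sum_coeff, Finset.sum_eq_zero]
    · ring
    · intro i hi
      simp only [Finset.mem_Icc] at hi
      rw [coeff_C_mul, coeff_X_pow, if_neg (by omega)]
      ring
  have cd1 : g.coeff (d - 1) = 0 := by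
    rw [hg, coeff_add, coeff_add, coeff_X_pow, coeff_C_mul, coeff_X_pow, if_neg (by omega),
      if_neg (by omega), finset_sum_coeff, Finset.sum_eq_zero]
    · ring
    · intro i hi
      simp only [Finset.mem_Icc] at hi
      rw [coeff_C_mul, coeff_X_pow, if_neg (by omega)]
      ring
  have cm : g.coeff (m - 1) = tK := by
    rw [hg, coeff_add, coeff_add, coeff_X_pow, coeff_C_mul, coeff_X_pow, if_neg (by omega),
      if_pos rfl, finset_sum_coeff, Finset.sum_eq_zero]
    · ring
    · intro i hi
      simp only [Finset.mem_Icc] at hi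
      rw [coeff_C_mul, coeff_X_pow, if_neg (by omega)]
      ring
  -- c = 1
  have hc1 : c = 1 := by
    have := (key d).symm.trans cd
    simpa [Nat.sub_self, if_neg (by omega : ¬ d = 0)] using this
  -- b = 0
  have hb : b = 0 := by
    have h1 := (key (d - 1)).symm.trans cd1
    rw [hc1, if_neg (by omega : ¬ d - 1 = 0), show d - (d - 1) = 1 by omega, pow_one,
      show d.choose (d - 1) = d by
        rw [show d - 1 = d - 1 from rfl, Nat.choose_symm (by omega : 1 ≤ d), Nat.choose_one_right]] at h1
    haveI : CharZero (RatFunc ℂ) :=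
      charZero_of_injective_algebraMap (algebraMap ℂ (RatFunc ℂ)).injective
    haveI : CharZero (AlgebraicClosure (RatFunc ℂ)) :=
      charZero_of_injective_algebraMap
        (algebraMap (RatFunc ℂ) (AlgebraicClosure (RatFunc ℂ))).injective
    have hdK : ((d : AlgebraicClosure (RatFunc ℂ))) ≠ 0 := Nat.cast_ne_zero.mpr (by omega)
    rw [one_mul, add_zero, mul_eq_zero, neg_eq_zero] at h1
    tauto
  have h3 := (key (m - 1)).symm.trans cm
  rw [hc1, hb, if_neg (by omega : ¬ m - 1 = 0), neg_zero,
    zero_pow (by omega : d - (m - 1) ≠ 0)] at h3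
  exact tK_ne_zero (by simpa using h3.symm)
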